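/- arXiv:1006.3488 — 7 statements merged into one kernel-verified Lean document; each statement's English description precedes it below -/
import Mathlib

section
/- For any symmetric positive definite 2×2 real matrix b and any 2×2 real matrix m, there exists a unique antisymmetric 2×2 matrix a such that b·m + a·b is symmetric. -/
open Matrix

theorem stmt_5 (b m : Matrix (Fin 2) (Fin 2) ℝ) (hb : b.PosDef) :
    ∃! a : Matrix (Fin 2) (Fin 2) ℝ, aᵀ = -a ∧ (b * m + a * b).IsSymm := by
  -- diagonal entries of b are positive
  have h00 : 0 < b 0 0 := by
    have := hb.dotProduct_mulVec_pos (x := Pi.single (0 : Fin 2) (1 : ℝ)) (by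
      intro h
      have := congrFun h 0
      simp at this)
    simpa [dotProduct, mulVec, Fin.sum_univ_two, Pi.single_apply] using this
  have h11 : 0 < b 1 1 := by
    have := hb.dotProduct_mulVec_pos (x := Pi.single (1 : Fin 2) (1 : ℝ)) (by
      intro h
      have := congrFun h 1
      simp at this)
    simpa [dotProduct, mulVec, Fin.sum_univ_two, Pi.single_apply] using this
  have htr : b 0 0 + b 1 1 ≠ 0 := by positivity
  have hbs : b 0 1 = b 1 0 := by
    have := congrFun (congrFun hb.1 0) 1
    simpa [Matrix.conjTranspose_apply] using this.symm
  set t : ℝ := ((b * m) 1 0 - (b * m) 0 1) / (b 0 0 + b 1 1) with ht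
  refine ⟨Matrix.of ![![0, t], ![-t, 0]], ⟨?_, ?_⟩, ?_⟩
  · ext i j
    fin_cases i <;> fin_cases j <;> simp [Matrix.transpose_apply]
  · rw [Matrix.IsSymm]
    ext i j
    fin_cases i <;> fin_cases j <;>
      simp [Matrix.transpose_apply, Matrix.mul_apply, Matrix.vecMul, dotProduct,
        Fin.sum_univ_two, ht, hbs] <;>
      field_simp <;> ring
  · intro a ⟨ha, hs⟩
    have ha00 : a 0 0 = 0 := by
      have := congrFun (congrFun ha 0) 0
      simp [Matrix.transpose_apply] at this
      linarith
    have ha11 : a 1 1 = 0 := by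
      have := congrFun (congrFun ha 1) 1
      simp [Matrix.transpose_apply] at this
      linarith
    have ha10 : a 1 0 = -a 0 1 := by
      have := congrFun (congrFun ha 0) 1
      simpa [Matrix.transpose_apply] using this
    have hs' := congrFun (congrFun hs 1) 0
    simp [Matrix.transpose_apply, Matrix.mul_apply, Fin.sum_univ_two, ha00, ha11, ha10] at hs'
    have hval : a 0 1 = t := by
      rw [ht]
      rw [eq_div_iff htr]
      simp [Matrix.mul_apply, Fin.sum_univ_two]
      nlinarith [hs', hbs]
    ext i j
    fin_cases i <;> fin_cases j <;> simp [ha00, ha11, ha10, hval]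
end

section
/- For any symmetric positive definite 3×3 real matrix b and any 3×3 real matrix m, there exists a unique antisymmetric 3×3 matrix a such that b·m + a·b is symmetric. -/
open Matrix

private lemma halve3 {y : Matrix (Fin 3) (Fin 3) ℝ} (h : y + y = 0) : y = 0 := by
  have h2 : (2 : ℝ) • y = 0 := by rw [two_smul]; exact h
  rcases smul_eq_zero.mp h2 with h' | h'
  · norm_num at h'
  · exact h'

private lemma key3 (b d : Matrix (Fin 3) (Fin 3) ℝ) (hb : b.PosDef) (hd : dᵀ = -d)
    (h : d * b + b * d = 0) : d = 0 := by
  have hbd : b * d = -(d * b) := by linear_combination (norm := noncomm_ring) h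
  have ht : trace (d * b * d) = 0 := by
    have h1 : trace (d * b * d) = trace (d * d * b) := by
      rw [trace_mul_comm (d * b) d, ← mul_assoc]
    have h2 : trace (d * b * d) = -trace (d * d * b) := by
      calc trace (d * b * d) = trace (d * (b * d)) := by rw [mul_assoc]
        _ = trace (d * -(d * b)) := by rw [hbd]
        _ = -trace (d * d * b) := by rw [mul_neg, trace_neg, mul_assoc]
    linarith [h1, h2]
  have ht2 : trace (d * b * dᵀ) = 0 := by
    rw [hd, mul_neg, trace_neg, ht, neg_zero]
  have hdiag : ∀ i, (d * b * dᵀ) i i = (d i) ⬝ᵥ (b *ᵥ (d i)) := by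
    intro i
    simp only [mul_apply, transpose_apply, dotProduct, mulVec, Finset.sum_mul]
    rw [Finset.sum_comm]
    apply Finset.sum_congr rfl
    intro k _
    simp only [Finset.mul_sum, mul_assoc]
  have hnn : ∀ i, 0 ≤ (d * b * dᵀ) i i := by
    intro i
    rw [hdiag i]
    simpa using hb.posSemidef.dotProduct_mulVec_nonneg (d i)
  have hsum : ∑ i, (d * b * dᵀ) i i = 0 := ht2
  have hzero : ∀ i ∈ Finset.univ, (d * b * dᵀ) i i = 0 :=
    (Finset.sum_eq_zero_iff_of_nonneg (fun i _ => hnn i)).mp hsum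
  ext i j
  have hrow : d i = 0 := by
    by_contra hne
    have hpos := hb.dotProduct_mulVec_pos hne
    have h0 := hzero i (Finset.mem_univ i)
    rw [hdiag i] at h0
    simp only [star_trivial] at hpos
    rw [h0] at hpos
    exact lt_irrefl 0 hpos
  simp [congrFun hrow j]

private noncomputable def Fmap (b : Matrix (Fin 3) (Fin 3) ℝ) :
    Matrix (Fin 3) (Fin 3) ℝ →ₗ[ℝ] Matrix (Fin 3) (Fin 3) ℝ where
  toFun x := (x - xᵀ) * b + b * (x - xᵀ) + (x + xᵀ)
  map_add' x y := by
    simp only [transpose_add]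
    noncomm_ring
  map_smul' c x := by
    simp only [transpose_smul, smul_eq_mul, RingHom.id_apply, ← smul_sub, ← smul_add,
      smul_mul_assoc, mul_smul_comm]

theorem stmt_6 (b m : Matrix (Fin 3) (Fin 3) ℝ) (hb : b.PosDef) :
    ∃! a : Matrix (Fin 3) (Fin 3) ℝ, aᵀ = -a ∧ (b * m + a * b).IsSymm := by
  have hbs : bᵀ = b := by
    have := hb.isHermitian.eq
    simpa using this
  set C : Matrix (Fin 3) (Fin 3) ℝ := mᵀ * b - b * m with hC
  have hCT : Cᵀ = -C := by
    simp [hC, transpose_sub, transpose_mul, hbs, transpose_transpose]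
  have hchar : ∀ a : Matrix (Fin 3) (Fin 3) ℝ, aᵀ = -a →
      ((b * m + a * b).IsSymm ↔ a * b + b * a = C) := by
    intro a ha
    constructor
    · intro hs
      have h1 := hs
      unfold Matrix.IsSymm at h1
      rw [transpose_add, transpose_mul, transpose_mul, hbs, ha] at h1
      rw [hC]
      linear_combination (norm := noncomm_ring) -h1
    · intro heq
      unfold Matrix.IsSymm
      rw [transpose_add, transpose_mul, transpose_mul, hbs, ha]
      rw [hC] at heq
      linear_combination (norm := noncomm_ring) -heq
  have hinj : Function.Injective (Fmap b) := by
    rw [← LinearMap.ker_eq_bot, LinearMap.ker_eq_bot']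
    intro x hx
    simp only [Fmap, LinearMap.coe_mk, AddHom.coe_mk] at hx
    have hxT : ((x - xᵀ) * b + b * (x - xᵀ) + (x + xᵀ))ᵀ = 0 := by rw [hx, transpose_zero]
    rw [transpose_add, transpose_add, transpose_mul, transpose_mul, transpose_sub,
      transpose_transpose, transpose_add, transpose_transpose, hbs] at hxT
    have hsym : x + xᵀ = 0 := by
      apply halve3
      have hadd := congrArg₂ (· + ·) hx hxT
      simp only [add_zero] at hadd
      linear_combination (norm := noncomm_ring) hadd
    have hanti : xᵀ = -x := by linear_combination (norm := noncomm_ring) hsym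
    have h2x : x - xᵀ = x + x := by rw [hanti, sub_neg_eq_add]
    rw [h2x, hsym, add_zero] at hx
    have hz : x * b + b * x = 0 := by
      apply halve3
      linear_combination (norm := noncomm_ring) hx
    exact key3 b x hb hanti hz
  have hsurj : Function.Surjective (Fmap b) := LinearMap.injective_iff_surjective.mp hinj
  obtain ⟨x, hxeq⟩ := hsurj (C + C)
  simp only [Fmap, LinearMap.coe_mk, AddHom.coe_mk] at hxeq
  have hxT : ((x - xᵀ) * b + b * (x - xᵀ) + (x + xᵀ))ᵀ = (C + C)ᵀ := by rw [hxeq]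
  rw [transpose_add, transpose_add, transpose_mul, transpose_mul, transpose_sub,
    transpose_transpose, transpose_add, transpose_transpose, hbs, transpose_add, hCT] at hxT
  have hsym : x + xᵀ = 0 := by
    apply halve3
    have hadd := congrArg₂ (· + ·) hxeq hxT
    linear_combination (norm := noncomm_ring) hadd
  have hanti : xᵀ = -x := by linear_combination (norm := noncomm_ring) hsym
  have h2x : x - xᵀ = x + x := by rw [hanti, sub_neg_eq_add]
  rw [h2x, hsym, add_zero] at hxeq
  have hsol : x * b + b * x = C := by
    have : (x * b + b * x - C) + (x * b + b * x - C) = 0 := by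
      linear_combination (norm := noncomm_ring) hxeq
    have := halve3 this
    linear_combination (norm := noncomm_ring) this
  refine ⟨x, ⟨hanti, (hchar x hanti).mpr hsol⟩, ?_⟩
  rintro y ⟨hyT, hyS⟩
  have hysol : y * b + b * y = C := (hchar y hyT).mp hyS
  have hd : (y - x)ᵀ = -(y - x) := by
    rw [transpose_sub, hyT, hanti]; abel
  have hdz : (y - x) * b + b * (y - x) = 0 := by
    linear_combination (norm := noncomm_ring) hysol - hsol
  exact sub_eq_zero.mp (key3 b (y - x) hb hd hdz)
end

section
/- Let b(t) be a differentiable matrix-valued function satisfying b' = b·m + a·b + (1/(2W))((bᵀ)⁻¹ − b) for some matrix function m(t), antisymmetric matrix function a(t), and constant W > 0, with b(t) invertible for all t. Then c(t) = b(t)ᵀ b(t) satisfies c' = c·m + mᵀ·c + (1/W)(I − c). -/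
open Matrix

theorem stmt_7 (n : ℕ) (b m a : ℝ → Matrix (Fin n) (Fin n) ℝ) (W : ℝ) (hW : 0 < W)
    (hanti : ∀ t, (a t)ᵀ = -(a t))
    (hinv : ∀ t, IsUnit (b t).det)
    (hder : ∀ t (i j : Fin n), HasDerivAt (fun s => b s i j)
      ((b t * m t + a t * b t + (2 * W)⁻¹ • (((b t)ᵀ)⁻¹ - b t)) i j) t) :
    ∀ t (i j : Fin n), HasDerivAt (fun s => ((b s)ᵀ * b s) i j)
      (((b t)ᵀ * b t * m t + (m t)ᵀ * ((b t)ᵀ * b t) +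
        W⁻¹ • ((1 : Matrix (Fin n) (Fin n) ℝ) - (b t)ᵀ * b t)) i j) t := by
  intro t i j
  have hdetT : IsUnit ((b t)ᵀ).det := by rw [Matrix.det_transpose]; exact hinv t
  set D := b t * m t + a t * b t + (2 * W)⁻¹ • (((b t)ᵀ)⁻¹ - b t) with hD
  have hW0 : W ≠ 0 := hW.ne'
  have h2 : (2 * W)⁻¹ + (2 * W)⁻¹ = W⁻¹ := by
    rw [mul_inv]
    ring
  have key : Dᵀ * b t + (b t)ᵀ * D =
      (b t)ᵀ * b t * m t + (m t)ᵀ * ((b t)ᵀ * b t) +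
        W⁻¹ • ((1 : Matrix (Fin n) (Fin n) ℝ) - (b t)ᵀ * b t) := by
    rw [hD, transpose_add, transpose_add, transpose_mul, transpose_mul, transpose_smul,
      transpose_sub, transpose_nonsing_inv, transpose_transpose, hanti]
    rw [Matrix.add_mul, Matrix.add_mul, Matrix.mul_add, Matrix.mul_add,
      Matrix.smul_mul, Matrix.mul_smul, Matrix.sub_mul, Matrix.mul_sub,
      Matrix.nonsing_inv_mul _ (hinv t), Matrix.mul_nonsing_inv _ hdetT]
    rw [← h2, add_smul]
    simp only [Matrix.mul_assoc, Matrix.mul_neg, Matrix.neg_mul]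
    abel
  have hds : HasDerivAt (fun s => ∑ k, b s k i * b s k j)
      (∑ k, (D k i * b t k j + b t k i * D k j)) t :=
    HasDerivAt.fun_sum fun k _ => (hder t k i).mul (hder t k j)
  have hmul : (fun s => ((b s)ᵀ * b s) i j) = fun s => ∑ k, b s k i * b s k j := by
    funext s; simp [Matrix.mul_apply]
  rw [hmul, ← key]
  convert hds using 1
  simp [Matrix.add_apply, Matrix.mul_apply, Finset.sum_add_distrib]
end

section
/- Let b(t) be a differentiable invertible matrix-valued function satisfying b' = b·m + a·b + (1/(2W))((bᵀ)⁻¹ − b/(1 − ‖b‖²/l²)) where ‖b‖² = tr(bᵀb), a(t) is antisymmetric, W > 0, l > 0, and tr(bᵀb) < l² for all t. Then c = bᵀb satisfies c' = c·m + mᵀ·c + (1/W)(I − c/(1 − tr(c)/l²)). -/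
open Matrix

theorem stmt_8 (n : ℕ) (b m a : ℝ → Matrix (Fin n) (Fin n) ℝ) (W l : ℝ)
    (hW : 0 < W) (hl : 0 < l)
    (hanti : ∀ t, (a t)ᵀ = -(a t))
    (hinv : ∀ t, IsUnit (b t).det)
    (hlen : ∀ t, ((b t)ᵀ * b t).trace < l ^ 2)
    (hder : ∀ t (i j : Fin n), HasDerivAt (fun s => b s i j)
      ((b t * m t + a t * b t + (2 * W)⁻¹ • (((b t)ᵀ)⁻¹ -
        (1 - ((b t)ᵀ * b t).trace / l ^ 2)⁻¹ • b t)) i j) t) :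
    ∀ t (i j : Fin n), HasDerivAt (fun s => ((b s)ᵀ * b s) i j)
      (((b t)ᵀ * b t * m t + (m t)ᵀ * ((b t)ᵀ * b t) +
        W⁻¹ • ((1 : Matrix (Fin n) (Fin n) ℝ) -
          (1 - ((b t)ᵀ * b t).trace / l ^ 2)⁻¹ • ((b t)ᵀ * b t))) i j) t := by
  intro t i j
  set D : Matrix (Fin n) (Fin n) ℝ := b t * m t + a t * b t + (2 * W)⁻¹ • (((b t)ᵀ)⁻¹ -
        (1 - ((b t)ᵀ * b t).trace / l ^ 2)⁻¹ • b t) with hD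
  have key : HasDerivAt (fun s => ((b s)ᵀ * b s) i j) ((Dᵀ * b t + (b t)ᵀ * D) i j) t := by
    have h1 : ∀ s, ((b s)ᵀ * b s) i j = ∑ k, b s k i * b s k j := by
      intro s; simp [Matrix.mul_apply, Matrix.transpose_apply]
    have h2 : (Dᵀ * b t + (b t)ᵀ * D) i j = ∑ k, (D k i * b t k j + b t k i * D k j) := by
      simp [Matrix.mul_apply, Matrix.transpose_apply, Finset.sum_add_distrib]
    simp only [h1, h2]
    exact HasDerivAt.fun_sum fun k _ => (hder t k i).mul (hder t k j)
  have heq : Dᵀ * b t + (b t)ᵀ * D = (b t)ᵀ * b t * m t + (m t)ᵀ * ((b t)ᵀ * b t) +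
        W⁻¹ • ((1 : Matrix (Fin n) (Fin n) ℝ) -
          (1 - ((b t)ᵀ * b t).trace / l ^ 2)⁻¹ • ((b t)ᵀ * b t)) := by
    have hdetT : IsUnit (b t)ᵀ.det := by simpa [Matrix.det_transpose] using hinv t
    have hb1 : (b t)⁻¹ * b t = 1 := Matrix.nonsing_inv_mul _ (hinv t)
    have hb2 : (b t)ᵀ * ((b t)ᵀ)⁻¹ = 1 := Matrix.mul_nonsing_inv _ hdetT
    have hT : (((b t)ᵀ)⁻¹)ᵀ = (b t)⁻¹ := by
      rw [← Matrix.transpose_nonsing_inv, Matrix.transpose_transpose]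
    have hW2 : W⁻¹ = (2 * W)⁻¹ + (2 * W)⁻¹ := by
      field_simp; ring
    rw [hD]
    simp only [Matrix.transpose_add, Matrix.transpose_mul, Matrix.transpose_smul,
      Matrix.transpose_sub, hT, hanti, Matrix.add_mul, Matrix.mul_add, Matrix.sub_mul,
      Matrix.mul_sub, Matrix.smul_mul, Matrix.mul_smul, hb1, hb2, Matrix.neg_mul,
      Matrix.mul_neg, hW2, add_smul, smul_sub, smul_smul, ← Matrix.mul_assoc]
    module
  rw [heq] at key
  exact key
end

section
/- Solutions of the spatially homogeneous Oldroyd-B conformation equation c' = c·m + mᵀ·c + (1/W)(I − c) with c(0) symmetric positive definite remain symmetric positive definite for all t ≥ 0 (assuming m is continuous). -/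
open Matrix Set
open scoped Topology NNReal

lemma herm_of_symm {n : ℕ} {A : Matrix (Fin n) (Fin n) ℝ} (h : Aᵀ = A) : A.IsHermitian := by
  have : Aᴴ = Aᵀ := by ext i j; simp [conjTranspose_apply]
  rw [Matrix.IsHermitian, this, h]

lemma posdef_stable {n : ℕ} (A : Matrix (Fin n) (Fin n) ℝ) (hA : A.PosDef) :
    ∃ ε > 0, ∀ B : Matrix (Fin n) (Fin n) ℝ, B.IsHermitian →
      (∀ i j, |B i j - A i j| < ε) → B.PosDef := by
  rcases Nat.eq_zero_or_pos n with hn | hn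
  · refine ⟨1, one_pos, fun B hB _ => ⟨hB, fun x hx => absurd ?_ hx⟩⟩
    subst hn
    exact Finsupp.ext fun i => i.elim0
  · haveI : Nonempty (Fin n) := ⟨⟨0, hn⟩⟩
    set f : Matrix (Fin n) (Fin n) ℝ → (Fin n → ℝ) → ℝ :=
      fun M x => ∑ i, ∑ j, x i * M i j * x j with hf
    have hform : ∀ (M : Matrix (Fin n) (Fin n) ℝ) (x : Fin n → ℝ),
        star x ⬝ᵥ M *ᵥ x = f M x := by
      intro M x
      simp [f, dotProduct, mulVec, Finset.mul_sum, mul_assoc]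
    have hcont : Continuous (f A) :=
      continuous_finset_sum _ fun i _ => continuous_finset_sum _ fun j _ =>
        (((continuous_apply i).mul continuous_const).mul (continuous_apply j))
    have hsne : (Metric.sphere (0 : Fin n → ℝ) 1).Nonempty :=
      NormedSpace.sphere_nonempty.mpr zero_le_one
    obtain ⟨u, hu, hmin⟩ := (isCompact_sphere (0 : Fin n → ℝ) 1).exists_isMinOn hsne
      hcont.continuousOn
    have hu1 : ‖u‖ = 1 := by simpa using hu
    have hune : u ≠ 0 := fun h => by simp [h] at hu1
    have hε0 : 0 < f A u := by rw [← hform]; exact hA.dotProduct_mulVec_pos hune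
    refine ⟨f A u / (n ^ 2 + 1), by positivity, fun B hB hclose => posDef_iff_dotProduct_mulVec.mpr ⟨hB, fun x hx => ?_⟩⟩
    set ε := f A u / (n ^ 2 + 1) with hεdef
    have hεpos : (0:ℝ) < ε := by rw [hεdef]; positivity
    -- key : positive on the sphere
    have key : ∀ y : Fin n → ℝ, ‖y‖ = 1 → 0 < f B y := by
      intro y hy
      have hyb : ∀ i, |y i| ≤ 1 := by
        intro i
        calc |y i| = ‖y i‖ := rfl
          _ ≤ ‖y‖ := norm_le_pi_norm y i
          _ = 1 := hy
      have hsplit : f B y - f A y = ∑ i, ∑ j, y i * (B i j - A i j) * y j := by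
        rw [hf]
        simp only []
        rw [← Finset.sum_sub_distrib]
        refine Finset.sum_congr rfl fun i _ => ?_
        rw [← Finset.sum_sub_distrib]
        exact Finset.sum_congr rfl fun j _ => by ring
      have hdiff : |f B y - f A y| ≤ (n * n) * ε := by
        rw [hsplit]
        calc |∑ i, ∑ j, y i * (B i j - A i j) * y j|
            ≤ ∑ i, |∑ j, y i * (B i j - A i j) * y j| := Finset.abs_sum_le_sum_abs _ _
          _ ≤ ∑ i : Fin n, ∑ j : Fin n, |y i * (B i j - A i j) * y j| :=
              Finset.sum_le_sum fun i _ => Finset.abs_sum_le_sum_abs _ _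
          _ ≤ ∑ i : Fin n, ∑ j : Fin n, ε := by
              refine Finset.sum_le_sum fun i _ => Finset.sum_le_sum fun j _ => ?_
              rw [abs_mul, abs_mul]
              have := mul_le_mul (mul_le_mul (hyb i) (hclose i j).le (abs_nonneg _)
                zero_le_one) (hyb j) (abs_nonneg _) (by positivity)
              simpa using this
          _ = (n * n) * ε := by
              simp [Finset.sum_const, Finset.card_univ]
              ring
      have hless : (n * n : ℝ) * ε < f A u := by
        have hcancel : ((n:ℝ)^2+1) * ε = f A u := by rw [hεdef]; field_simp
        have hlt : (n:ℝ)*n < (n:ℝ)^2+1 := by nlinarith [sq_nonneg (n:ℝ)]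
        calc (n*n:ℝ)*ε < ((n:ℝ)^2+1)*ε := mul_lt_mul_of_pos_right hlt hεpos
          _ = f A u := hcancel
      have hAy : f A u ≤ f A y := hmin (by simp [hy])
      have := abs_le.mp hdiff
      linarith [this.1]
    -- scale
    have hxn : (0:ℝ) < ‖x‖ := norm_pos_iff.mpr hx
    set u' : Fin n → ℝ := ‖x‖⁻¹ • x with hu'
    have hu'1 : ‖u'‖ = 1 := by
      rw [hu', norm_smul]
      simp [abs_of_pos (inv_pos.mpr hxn), inv_mul_cancel₀ hxn.ne']
    have hscale : f B u' = (‖x‖⁻¹ * ‖x‖⁻¹) * f B x := by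
      rw [hf]
      simp only [Finset.mul_sum]
      refine Finset.sum_congr rfl fun i _ => ?_
      refine Finset.sum_congr rfl fun j _ => ?_
      simp [hu', Pi.smul_apply, smul_eq_mul]
      ring
    have h1 := key u' hu'1
    rw [hscale] at h1
    rw [hform]
    rcases mul_pos_iff.mp h1 with h | h
    · exact h.2
    · exfalso
      have : 0 < ‖x‖⁻¹ * ‖x‖⁻¹ := by positivity
      linarith [h.1]


lemma symm_on_Icc {n : ℕ} (c m : ℝ → Matrix (Fin n) (Fin n) ℝ) (W : ℝ) (hW : 0 < W)
    (hm : Continuous m)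
    (hder : ∀ t (i j : Fin n), HasDerivAt (fun s => c s i j)
      ((c t * m t + (m t)ᵀ * c t +
        W⁻¹ • ((1 : Matrix (Fin n) (Fin n) ℝ) - c t)) i j) t)
    (h0 : (c 0)ᵀ = c 0) {b : ℝ} (hb : 0 < b) :
    ∀ t ∈ Icc (0:ℝ) b, (c t)ᵀ = c t := by
  classical
  set proj : ℝ → ℝ := fun t => max 0 (min t b) with hprojdef
  have hproj_mem : ∀ t, proj t ∈ Icc (0:ℝ) b := fun t =>
    ⟨le_max_left _ _, max_le hb.le (min_le_right t b)⟩
  have hproj_id : ∀ t ∈ Icc (0:ℝ) b, proj t = t := by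
    intro t ht
    simp [hprojdef, min_eq_left ht.2, max_eq_right ht.1]
  -- bound on m over [0, b]
  set q : ℝ → ℝ := fun t => ∑ i, ∑ j, |m t i j| with hqdef
  have hq : Continuous q :=
    continuous_finset_sum _ fun i _ => continuous_finset_sum _ fun j _ =>
      (hm.matrix_elem i j).abs
  obtain ⟨ts, -, hmax⟩ := isCompact_Icc.exists_isMaxOn (nonempty_Icc.mpr hb.le)
    hq.continuousOn
  set B := q ts with hBdef
  have hB0 : 0 ≤ B := by
    rw [hBdef, hqdef]
    exact Finset.sum_nonneg fun i _ => Finset.sum_nonneg fun j _ => abs_nonneg _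
  have hbound : ∀ t (i j : Fin n), |m (proj t) i j| ≤ B := by
    intro t i j
    have h1 : |m (proj t) i j| ≤ q (proj t) := by
      rw [hqdef]
      calc |m (proj t) i j| ≤ ∑ j', |m (proj t) i j'| :=
            Finset.single_le_sum (f := fun j' => |m (proj t) i j'|)
              (fun j' _ => abs_nonneg _) (Finset.mem_univ j)
        _ ≤ ∑ i', ∑ j', |m (proj t) i' j'| :=
            Finset.single_le_sum (f := fun i' => ∑ j', |m (proj t) i' j'|)
              (fun i' _ => Finset.sum_nonneg fun j' _ => abs_nonneg _) (Finset.mem_univ i)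
    exact h1.trans (hmax (hproj_mem t))
  -- the vector field
  set v : ℝ → (Fin n → Fin n → ℝ) → (Fin n → Fin n → ℝ) :=
    fun t X i j => (∑ k, X i k * m (proj t) k j) + (∑ k, m (proj t) k i * X k j)
      - W⁻¹ * X i j with hvdef
  set K : ℝ≥0 := Real.toNNReal ((n:ℝ) * B + (n:ℝ) * B + W⁻¹) with hKdef
  have hKcoe : (K : ℝ) = (n:ℝ) * B + (n:ℝ) * B + W⁻¹ := by
    rw [hKdef, Real.coe_toNNReal]
    positivity
  have hlip : ∀ t, LipschitzWith K (v t) := by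
    intro t
    apply LipschitzWith.of_dist_le_mul
    intro X Y
    rw [dist_eq_norm, dist_eq_norm, hKcoe]
    have hZ : ∀ i k, |(X - Y) i k| ≤ ‖X - Y‖ := by
      intro i k
      calc |(X - Y) i k| = ‖(X - Y) i k‖ := rfl
        _ ≤ ‖(X - Y) i‖ := norm_le_pi_norm ((X - Y) i) k
        _ ≤ ‖X - Y‖ := norm_le_pi_norm (X - Y) i
    have hnn : (0:ℝ) ≤ ((n:ℝ) * B + (n:ℝ) * B + W⁻¹) * ‖X - Y‖ := by positivity
    rw [pi_norm_le_iff_of_nonneg hnn]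
    intro i
    rw [pi_norm_le_iff_of_nonneg hnn]
    intro j
    have hentry : (v t X - v t Y) i j =
        (∑ k, (X - Y) i k * m (proj t) k j) + (∑ k, m (proj t) k i * (X - Y) k j)
          - W⁻¹ * (X - Y) i j := by
      simp only [Pi.sub_apply, hvdef, sub_mul, mul_sub, Finset.sum_sub_distrib]
      ring
    show ‖(v t X - v t Y) i j‖ ≤ _
    rw [Real.norm_eq_abs, hentry]
    have h1 : |∑ k, (X - Y) i k * m (proj t) k j| ≤ (n:ℝ) * B * ‖X - Y‖ := by
      calc |∑ k, (X - Y) i k * m (proj t) k j| ≤ ∑ k, |(X - Y) i k * m (proj t) k j| :=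
            Finset.abs_sum_le_sum_abs _ _
        _ ≤ ∑ _k : Fin n, ‖X - Y‖ * B := by
            refine Finset.sum_le_sum fun k _ => ?_
            rw [abs_mul]
            exact mul_le_mul (hZ i k) (hbound t k j) (abs_nonneg _) (norm_nonneg _)
        _ = (n:ℝ) * B * ‖X - Y‖ := by simp [Finset.sum_const, Finset.card_univ]; ring
    have h2 : |∑ k, m (proj t) k i * (X - Y) k j| ≤ (n:ℝ) * B * ‖X - Y‖ := by
      calc |∑ k, m (proj t) k i * (X - Y) k j| ≤ ∑ k, |m (proj t) k i * (X - Y) k j| :=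
            Finset.abs_sum_le_sum_abs _ _
        _ ≤ ∑ _k : Fin n, B * ‖X - Y‖ := by
            refine Finset.sum_le_sum fun k _ => ?_
            rw [abs_mul]
            exact mul_le_mul (hbound t k i) (hZ k j) (abs_nonneg _) hB0
        _ = (n:ℝ) * B * ‖X - Y‖ := by simp [Finset.sum_const, Finset.card_univ]; ring
    have h3 : |W⁻¹ * (X - Y) i j| ≤ W⁻¹ * ‖X - Y‖ := by
      rw [abs_mul, abs_of_pos (inv_pos.mpr hW)]
      exact mul_le_mul_of_nonneg_left (hZ i j) (inv_pos.mpr hW).le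
    have habs1 := abs_sub ((∑ k, (X - Y) i k * m (proj t) k j)
      + (∑ k, m (proj t) k i * (X - Y) k j)) (W⁻¹ * (X - Y) i j)
    have habs2 := abs_add_le (∑ k, (X - Y) i k * m (proj t) k j)
      (∑ k, m (proj t) k i * (X - Y) k j)
    have hdist : ((n:ℝ) * B + (n:ℝ) * B + W⁻¹) * ‖X - Y‖
        = (n:ℝ) * B * ‖X - Y‖ + (n:ℝ) * B * ‖X - Y‖ + W⁻¹ * ‖X - Y‖ := by ring
    rw [hdist]
    linarith
  -- S, the antisymmetric part, solves the ODE v with S 0 = 0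
  set S : ℝ → (Fin n → Fin n → ℝ) := fun t i j => c t i j - c t j i with hSdef
  have hS0 : S 0 = (fun _ _ => (0:ℝ)) := by
    funext i j
    have := congrFun (congrFun h0 i) j
    rw [transpose_apply] at this
    simp [hSdef, this]
  have hSderiv : ∀ t ∈ Icc (0:ℝ) b, HasDerivAt S (v t (S t)) t := by
    intro t ht
    rw [hasDerivAt_pi]
    intro i
    rw [hasDerivAt_pi]
    intro j
    have h1 := (hder t i j).sub (hder t j i)
    convert h1 using 1
    · rfl
    simp only [hvdef, hSdef, Matrix.add_apply, Matrix.mul_apply, Matrix.smul_apply,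
      Matrix.sub_apply, Matrix.transpose_apply, Matrix.one_apply, smul_eq_mul,
      hproj_id t ht, sub_mul, mul_sub, Finset.sum_sub_distrib]
    have e1 : ∀ (a b' : Fin n), (∑ x, c t x a * m t x b') = ∑ x, m t x b' * c t x a :=
      fun a b' => Finset.sum_congr rfl fun x _ => mul_comm _ _
    have e2 : ∀ (a b' : Fin n), (∑ x, m t x a * c t b' x) = ∑ x, c t b' x * m t x a :=
      fun a b' => Finset.sum_congr rfl fun x _ => mul_comm _ _
    rcases eq_or_ne i j with rfl | hij
    · rw [e1 i i, e2 i i]; ring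
    · simp only [hij, Ne.symm hij, if_false]
      rw [e1 i j, e2 i j]; ring
  have hScont : ContinuousOn S (Icc 0 b) := by
    apply Continuous.continuousOn
    apply continuous_pi
    intro i
    apply continuous_pi
    intro j
    have h1 : Continuous fun s => c s i j :=
      continuous_iff_continuousAt.mpr fun t => (hder t i j).continuousAt
    have h2 : Continuous fun s => c s j i :=
      continuous_iff_continuousAt.mpr fun t => (hder t j i).continuousAt
    exact h1.sub h2
  have hv0 : ∀ t, v t (fun _ _ => (0:ℝ)) = (fun _ _ => (0:ℝ)) := by
    intro t; funext i j; simp [hvdef]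
  have huniq := ODE_solution_unique_of_mem_Icc_right (v := v) (s := fun _ => Set.univ)
    (K := K) (f := S) (g := fun _ => (fun _ _ => (0:ℝ))) (a := 0) (b := b)
    (fun t _ => (hlip t).lipschitzOnWith)
    hScont
    (fun t ht => (hSderiv t (Ico_subset_Icc_self ht)).hasDerivWithinAt)
    (fun _ _ => trivial)
    continuousOn_const
    (fun t _ => by
      rw [hv0 t]
      exact (hasDerivAt_const t _).hasDerivWithinAt)
    (fun _ _ => trivial)
    hS0
  intro t ht
  have hz := huniq ht
  ext i j
  rw [transpose_apply]
  have := congrFun (congrFun hz i) j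
  simp only [hSdef, Pi.zero_apply] at this
  -- this : c t i j - c t j i = 0
  have h2 : c t i j - c t j i = 0 := by exact_mod_cast this
  linarith

theorem stmt_11 (n : ℕ) (c m : ℝ → Matrix (Fin n) (Fin n) ℝ) (W : ℝ) (hW : 0 < W)
    (hm : Continuous m)
    (hder : ∀ t (i j : Fin n), HasDerivAt (fun s => c s i j)
      ((c t * m t + (m t)ᵀ * c t +
        W⁻¹ • ((1 : Matrix (Fin n) (Fin n) ℝ) - c t)) i j) t)
    (h0 : (c 0).PosDef) :
    ∀ t : ℝ, 0 ≤ t → (c t).PosDef := by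
  have h0symm : (c 0)ᵀ = c 0 := by
    ext i j
    rw [transpose_apply]
    have h := congrFun (congrFun h0.1 i) j
    simpa [conjTranspose_apply] using h
  have hsym : ∀ t : ℝ, 0 ≤ t → (c t)ᵀ = c t := by
    intro t ht
    exact symm_on_Icc c m W hW hm hder h0symm (b := t + 1) (by linarith) t ⟨ht, by linarith⟩
  have hc_cont : ∀ i j, Continuous fun s => c s i j := fun i j =>
    continuous_iff_continuousAt.mpr fun t => (hder t i j).continuousAt
  intro t₀ ht₀
  by_contra hbad
  set A : Set ℝ := {t : ℝ | 0 ≤ t ∧ ¬ (c t).PosDef} with hAdef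
  have hA_ne : A.Nonempty := ⟨t₀, ht₀, hbad⟩
  have hA_bdd : BddBelow A := ⟨0, fun a ha => ha.1⟩
  set T := sInf A with hTdef
  have hT0 : 0 ≤ T := le_csInf hA_ne fun a ha => ha.1
  have hTle : ∀ t, 0 ≤ t → t < T → (c t).PosDef := by
    intro t h1 h2
    by_contra h
    exact absurd (csInf_le hA_bdd ⟨h1, h⟩) (not_le.mpr h2)
  -- c T is not PosDef
  have hTbad : ¬ (c T).PosDef := by
    intro hTpos
    obtain ⟨ε, hε, hstab⟩ := posdef_stable (c T) hTpos
    have hev : ∀ᶠ s in 𝓝 T, ∀ i j, |c s i j - c T i j| < ε := by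
      rw [Filter.eventually_all]
      intro i
      rw [Filter.eventually_all]
      intro j
      have : ContinuousAt (fun s => c s i j) T := (hc_cont i j).continuousAt
      have h2 := Metric.tendsto_nhds.mp this ε hε
      filter_upwards [h2] with s hs
      rwa [Real.dist_eq] at hs
    obtain ⟨δ, hδ, hball⟩ := Metric.eventually_nhds_iff.mp hev
    obtain ⟨a, haA, halt⟩ := exists_lt_of_csInf_lt hA_ne (show sInf A < T + δ by
      rw [← hTdef]; linarith)
    have haT : T ≤ a := csInf_le hA_bdd haA
    have hadist : dist a T < δ := by
      rw [Real.dist_eq, abs_of_nonneg (by linarith)]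
      linarith
    have haherm : (c a).IsHermitian := herm_of_symm (hsym a (hT0.trans haT))
    exact haA.2 (hstab (c a) haherm (hball hadist))
  have hTpos : 0 < T := by
    rcases lt_or_eq_of_le hT0 with h | h
    · exact h
    · exact absurd (h ▸ h0) hTbad
  have hermT : (c T).IsHermitian := herm_of_symm (hsym T hT0)
  -- quadratic forms
  have hdot : ∀ (M : Matrix (Fin n) (Fin n) ℝ) (x : Fin n → ℝ),
      x ⬝ᵥ (M *ᵥ x) = ∑ i, x i * ∑ j, M i j * x j := by
    intro M x
    simp [dotProduct, mulVec]
  have hgcont : ∀ x : Fin n → ℝ, Continuous fun s => x ⬝ᵥ (c s *ᵥ x) := by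
    intro x
    simp only [hdot]
    exact continuous_finset_sum _ fun i _ => continuous_const.mul
      (continuous_finset_sum _ fun j _ => (hc_cont i j).mul continuous_const)
  have hpos_form : ∀ x : Fin n → ℝ, x ≠ 0 → ∀ s, 0 ≤ s → s < T → 0 < x ⬝ᵥ (c s *ᵥ x) := by
    intro x hx s h1 h2
    have := (hTle s h1 h2).dotProduct_mulVec_pos hx
    rwa [show star x = x from star_trivial x] at this
  -- c T is PosSemidef
  have hpsd : (c T).PosSemidef := by
    refine posSemidef_iff_dotProduct_mulVec.mpr ⟨hermT, fun x => ?_⟩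
    rw [show star x = x from star_trivial x]
    rcases eq_or_ne x 0 with rfl | hx
    · simp
    · refine ge_of_tendsto (f := fun s => x ⬝ᵥ (c s *ᵥ x)) (x := 𝓝[<] T)
        ((hgcont x).continuousAt.continuousWithinAt.tendsto) ?_
      filter_upwards [Ioo_mem_nhdsLT_of_mem (show T ∈ Ioc (0:ℝ) T from ⟨hTpos, le_rfl⟩)]
        with s hs
      exact (hpos_form x hx s hs.1.le hs.2).le
  -- null vector
  have hxex : ∃ x : Fin n → ℝ, x ≠ 0 ∧ ¬ 0 < x ⬝ᵥ (c T *ᵥ x) := by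
    by_contra h
    push_neg at h
    exact hTbad (posDef_iff_dotProduct_mulVec.mpr ⟨hermT, fun x hx => by
      rw [show star x = x from star_trivial x]; exact h x hx⟩)
  obtain ⟨x, hx0, hxle⟩ := hxex
  have hxz : x ⬝ᵥ (c T *ᵥ x) = 0 := le_antisymm (not_lt.mp hxle) (by
    have := hpsd.dotProduct_mulVec_nonneg x
    rwa [show star x = x from star_trivial x] at this)
  have hnull : c T *ᵥ x = 0 := by
    have := (hpsd.dotProduct_mulVec_zero_iff x).mp
    rw [show star x = x from star_trivial x] at this
    exact this hxz
  -- derivative of the quadratic form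
  set g : ℝ → ℝ := fun s => x ⬝ᵥ (c s *ᵥ x) with hgdef
  set D : ℝ → Matrix (Fin n) (Fin n) ℝ := fun s =>
    c s * m s + (m s)ᵀ * c s + W⁻¹ • ((1 : Matrix (Fin n) (Fin n) ℝ) - c s) with hDdef
  have hgder : HasDerivAt g (x ⬝ᵥ (D T *ᵥ x)) T := by
    rw [hgdef]
    simp only [hdot]
    exact HasDerivAt.fun_sum fun i _ =>
      ((HasDerivAt.fun_sum fun j _ => (hder T i j).mul_const (x j)).const_mul (x i))
  have hval : x ⬝ᵥ (D T *ᵥ x) = W⁻¹ * (x ⬝ᵥ x) := by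
    rw [hDdef]
    simp only [add_mulVec, dotProduct_add]
    rw [← mulVec_mulVec, ← mulVec_mulVec]
    rw [dotProduct_mulVec x (c T) (m T *ᵥ x)]
    have hvm : x ᵥ* c T = c T *ᵥ x := by
      nth_rewrite 1 [← hsym T hT0]
      exact vecMul_transpose _ _
    rw [hvm, hnull]
    simp only [zero_dotProduct, mulVec_zero, dotProduct_zero, zero_add]
    rw [smul_mulVec, sub_mulVec, one_mulVec, hnull, sub_zero, dotProduct_smul]
    simp [smul_eq_mul]
  have hgT : g T = 0 := hxz
  have hL : 0 < x ⬝ᵥ (D T *ᵥ x) := by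
    rw [hval]
    have h1 : x ⬝ᵥ x ≠ 0 := fun h => hx0 (dotProduct_self_eq_zero.mp h)
    have h2 : 0 ≤ x ⬝ᵥ x := Finset.sum_nonneg fun i _ => mul_self_nonneg _
    have := lt_of_le_of_ne h2 (Ne.symm h1)
    positivity
  -- slope argument
  have hslope := hasDerivAt_iff_tendsto_slope.mp hgder
  have hmono : 𝓝[<] T ≤ 𝓝[≠] T :=
    nhdsWithin_mono T fun s hs => ne_of_lt hs
  have hL_le : x ⬝ᵥ (D T *ᵥ x) ≤ 0 := by
    refine le_of_tendsto (hslope.mono_left hmono) ?_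
    filter_upwards [Ioo_mem_nhdsLT_of_mem (show T ∈ Ioc (0:ℝ) T from ⟨hTpos, le_rfl⟩)]
      with s hs
    rw [slope_def_field]
    apply div_nonpos_of_nonneg_of_nonpos
    · rw [hgT, sub_zero]
      exact (hpos_form x hx0 s hs.1.le hs.2).le
    · linarith [hs.2]
  linarith
end

section
/- If b is an invertible symmetric real matrix solving db/dt = b·m + a·b + (1/(2W))(b⁻¹ − b) with a antisymmetric chosen so that the right-hand side is symmetric, then d/dt tr(b·b) = 2 tr(b·b·m) + (1/W)(n − tr(b·b)). -/
open Matrix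

theorem stmt_14 (n : ℕ) (b m a : ℝ → Matrix (Fin n) (Fin n) ℝ) (W : ℝ) (hW : 0 < W)
    (hsymm : ∀ t, (b t).IsSymm)
    (hinv : ∀ t, IsUnit (b t).det)
    (hanti : ∀ t, (a t)ᵀ = -(a t))
    (hrhs : ∀ t, (b t * m t + a t * b t + (2 * W)⁻¹ • ((b t)⁻¹ - b t)).IsSymm)
    (hder : ∀ t (i j : Fin n), HasDerivAt (fun s => b s i j)
      ((b t * m t + a t * b t + (2 * W)⁻¹ • ((b t)⁻¹ - b t)) i j) t) :
    ∀ t, HasDerivAt (fun s => (b s * b s).trace)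
      (2 * (b t * b t * m t).trace + W⁻¹ * ((n : ℝ) - (b t * b t).trace)) t := by
  intro t
  set B' := b t * m t + a t * b t + (2 * W)⁻¹ • ((b t)⁻¹ - b t) with hB'
  have h1 : HasDerivAt (fun s => (b s * b s).trace)
      (∑ i, ∑ j, (B' i j * b t j i + b t i j * B' j i)) t := by
    have htr : ∀ s, (b s * b s).trace = ∑ i, ∑ j, b s i j * b s j i := by
      intro s
      simp [Matrix.trace, Matrix.diag, Matrix.mul_apply]
    simp only [htr]
    apply HasDerivAt.fun_sum
    intro i _
    apply HasDerivAt.fun_sum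
    intro j _
    exact (hder t i j).mul (hder t j i)
  have hval : ∑ i, ∑ j, (B' i j * b t j i + b t i j * B' j i) = 2 * (B' * b t).trace := by
    have e1 : (B' * b t).trace = ∑ i, ∑ j, B' i j * b t j i := by
      simp [Matrix.trace, Matrix.diag, Matrix.mul_apply]
    have e2 : (b t * B').trace = ∑ i, ∑ j, b t i j * B' j i := by
      simp [Matrix.trace, Matrix.diag, Matrix.mul_apply]
    rw [Finset.sum_congr rfl fun i _ => Finset.sum_add_distrib,
      Finset.sum_add_distrib, ← e1, ← e2, Matrix.trace_mul_comm (b t) B']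
    ring
  have hsq : (b t * b t)ᵀ = b t * b t := by
    rw [Matrix.transpose_mul, (hsymm t).eq]
  have hab : (a t * (b t * b t)).trace = 0 := by
    have : (a t * (b t * b t)).trace = -(a t * (b t * b t)).trace := by
      conv_lhs => rw [← Matrix.trace_transpose, Matrix.transpose_mul, hanti t, hsq,
        Matrix.mul_neg, Matrix.trace_neg, Matrix.trace_mul_comm]
    linarith
  have hib : ((b t)⁻¹ * b t).trace = (n : ℝ) := by
    rw [Matrix.nonsing_inv_mul _ (hinv t), Matrix.trace_one]
    simp
  have hBval : 2 * (B' * b t).trace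
      = 2 * (b t * b t * m t).trace + W⁻¹ * ((n : ℝ) - (b t * b t).trace) := by
    rw [hB']
    rw [Matrix.add_mul, Matrix.add_mul, Matrix.smul_mul, Matrix.sub_mul,
      Matrix.trace_add, Matrix.trace_add, Matrix.trace_smul, Matrix.trace_sub,
      Matrix.mul_assoc (a t), hab, hib, Matrix.trace_mul_cycle (b t) (m t) (b t)]
    have hW' : W ≠ 0 := ne_of_gt hW
    field_simp
    linear_combination ((n : ℝ) - (b t * b t).trace) * mul_inv_cancel₀ hW'
  rw [← hBval, ← hval]
  exact h1
end

section
/- If b(t) is a symmetric solution of b' = b·m + a·b − (1/(2W))b + (1/(2W))b⁻¹ with a antisymmetric and m bounded, and b(0) is positive definite, then b(t) remains invertible (hence positive definite) on its maximal interval of existence. -/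
open Matrix

section helpers
open Filter


private lemma hasDerivAt_det' {n : ℕ} (b : ℝ → Matrix (Fin n) (Fin n) ℝ)
    (b' : Matrix (Fin n) (Fin n) ℝ) (t : ℝ)
    (h : ∀ i j, HasDerivAt (fun s => b s i j) (b' i j) t) :
    HasDerivAt (fun s => (b s).det) ((adjugate (b t) * b').trace) t := by
  have H : HasDerivAt (fun s => ∑ σ : Equiv.Perm (Fin n),
      ((Equiv.Perm.sign σ : ℤ) : ℝ) * ∏ i, b s (σ i) i)
      (∑ σ : Equiv.Perm (Fin n), ((Equiv.Perm.sign σ : ℤ) : ℝ) *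
        ∑ i, (∏ j ∈ Finset.univ.erase i, b t (σ j) j) * b' (σ i) i) t := by
    refine HasDerivAt.fun_sum fun σ _ => ?_
    have hp := HasDerivAt.fun_finsetProd (x := t) (u := (Finset.univ : Finset (Fin n)))
        (f := fun i s => b s (σ i) i) (f' := fun i => b' (σ i) i) (fun i _ => h (σ i) i)
    simpa [smul_eq_mul] using hp.const_mul (((Equiv.Perm.sign σ : ℤ) : ℝ))
  have hfun : (fun s => (b s).det) = (fun s => ∑ σ : Equiv.Perm (Fin n),
      ((Equiv.Perm.sign σ : ℤ) : ℝ) * ∏ i, b s (σ i) i) :=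
    funext fun s => Matrix.det_apply' _
  rw [hfun]
  convert H using 1
  have key : ∀ i : Fin n, (∑ k, adjugate (b t) i k * b' k i) =
      ∑ σ : Equiv.Perm (Fin n), ((Equiv.Perm.sign σ : ℤ) : ℝ) *
        (b' (σ i) i * ∏ j ∈ Finset.univ.erase i, b t (σ j) j) := by
    intro i
    have h1 : (∑ k, adjugate (b t) i k * b' k i)
        = ((b t).updateCol i (fun k => b' k i)).det := by
      rw [← Matrix.cramer_apply, Matrix.cramer_eq_adjugate_mulVec]
      simp [Matrix.mulVec, dotProduct]
    rw [h1, Matrix.det_apply']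
    refine Finset.sum_congr rfl fun σ _ => ?_
    congr 1
    rw [← Finset.mul_prod_erase Finset.univ _ (Finset.mem_univ i)]
    congr 1
    · simp [Matrix.updateCol_apply]
    · exact Finset.prod_congr rfl fun j hj =>
        by simp [Matrix.updateCol_apply, (Finset.mem_erase.1 hj).1]
  have htr : (adjugate (b t) * b').trace = ∑ i, ∑ k, adjugate (b t) i k * b' k i := by
    simp [Matrix.trace, Matrix.diag, Matrix.mul_apply]
  rw [htr, Finset.sum_congr rfl fun i _ => key i, Finset.sum_comm]
  refine Finset.sum_congr rfl fun σ _ => ?_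
  rw [Finset.mul_sum]
  exact Finset.sum_congr rfl fun i _ => by ring

private lemma trace_ineq {n : ℕ} {A M a' : Matrix (Fin n) (Fin n) ℝ}
    (hA : A.PosDef) (hs : A.IsSymm) (ha : a'ᵀ = -a') {c : ℝ} (hc : 0 ≤ c) :
    A.det * (M.trace - c * n) ≤ (adjugate A * (A * M + a' * A - c • A + c • A⁻¹)).trace := by
  have hdet : A.det ≠ 0 := hA.det_pos.ne'
  have hadj : adjugate A = A.det • A⁻¹ := by
    rw [Matrix.inv_def, Ring.inverse_eq_inv', smul_smul, mul_inv_cancel₀ hdet, one_smul]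
  have h1 : (adjugate A * (A * M)).trace = A.det * M.trace := by
    rw [← mul_assoc, Matrix.adjugate_mul, Matrix.smul_mul, one_mul, Matrix.trace_smul,
      smul_eq_mul]
  have htra : a'.trace = 0 := by
    have := Matrix.trace_transpose a'
    rw [ha, Matrix.trace_neg] at this
    linarith
  have h2 : (adjugate A * (a' * A)).trace = 0 := by
    rw [Matrix.trace_mul_comm, mul_assoc, Matrix.mul_adjugate, Matrix.mul_smul,
      Matrix.mul_one, Matrix.trace_smul, smul_eq_mul, htra, mul_zero]
  have h3 : (adjugate A * (c • A)).trace = c * (A.det * n) := by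
    rw [Matrix.mul_smul, Matrix.adjugate_mul, Matrix.trace_smul, Matrix.trace_smul,
      smul_eq_mul, smul_eq_mul, Matrix.trace_one]
    simp [Fintype.card_fin]
    try ring
  have hinvsymm : A⁻¹ᵀ = A⁻¹ := by
    rw [Matrix.transpose_nonsing_inv, hs.eq]
  have h4 : (adjugate A * (c • A⁻¹)).trace = c * A.det * ∑ i, ∑ j, (A⁻¹ i j)^2 := by
    rw [Matrix.mul_smul, Matrix.trace_smul, hadj, Matrix.smul_mul, Matrix.trace_smul]
    simp only [smul_eq_mul, Matrix.trace, Matrix.diag, Matrix.mul_apply]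
    rw [mul_assoc]
    congr 1; congr 1
    refine Finset.sum_congr rfl fun i _ => Finset.sum_congr rfl fun j _ => ?_
    have : A⁻¹ j i = A⁻¹ i j := by
      conv_lhs => rw [← hinvsymm]
      rfl
    rw [this]; ring
  have hS : 0 ≤ ∑ i, ∑ j, (A⁻¹ i j)^2 :=
    Finset.sum_nonneg fun i _ => Finset.sum_nonneg fun j _ => sq_nonneg _
  have hexp : (adjugate A * (A * M + a' * A - c • A + c • A⁻¹)).trace
      = A.det * M.trace - c * (A.det * n) + c * A.det * ∑ i, ∑ j, (A⁻¹ i j)^2 := by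
    rw [Matrix.mul_add, Matrix.mul_sub, Matrix.mul_add, Matrix.trace_add, Matrix.trace_sub,
      Matrix.trace_add, h1, h2, h3, h4]
    ring
  rw [hexp]
  have : 0 ≤ c * A.det * ∑ i, ∑ j, (A⁻¹ i j)^2 :=
    mul_nonneg (mul_nonneg hc hA.det_pos.le) hS
  nlinarith [hA.det_pos]



private lemma exists_unit_form_nonpos {n : ℕ} {A : Matrix (Fin n) (Fin n) ℝ}
    (hA : A.IsHermitian) (h : ¬ A.PosDef) :
    ∃ x : Fin n → ℝ, ‖x‖ = 1 ∧ x ⬝ᵥ A *ᵥ x ≤ 0 := by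
  rw [Matrix.posDef_iff_dotProduct_mulVec] at h
  push_neg at h
  obtain ⟨y, hy0, hy⟩ := h hA
  have hny : ‖y‖ ≠ 0 := norm_ne_zero_iff.2 hy0
  refine ⟨‖y‖⁻¹ • y, ?_, ?_⟩
  · rw [norm_smul, norm_inv, norm_norm, inv_mul_cancel₀ hny]
  · have hform : y ⬝ᵥ A *ᵥ y ≤ 0 := by simpa using hy
    have : (‖y‖⁻¹ • y) ⬝ᵥ A *ᵥ (‖y‖⁻¹ • y) = ‖y‖⁻¹ * (‖y‖⁻¹ * (y ⬝ᵥ A *ᵥ y)) := by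
      rw [Matrix.mulVec_smul, smul_dotProduct, dotProduct_smul]
      simp [smul_eq_mul, mul_assoc]
    rw [this]
    have h1 : 0 ≤ ‖y‖⁻¹ := inv_nonneg.2 (norm_nonneg _)
    exact mul_nonpos_of_nonneg_of_nonpos h1 (mul_nonpos_of_nonneg_of_nonpos h1 hform)

private lemma not_posDef_of_tendsto {n : ℕ} (b : ℝ → Matrix (Fin n) (Fin n) ℝ)
    (hcont : ∀ i j : Fin n, Continuous fun s => b s i j)
    (s : ℕ → ℝ) (t : ℝ) (hs : Tendsto s atTop (nhds t))
    (hherm : ∀ k, (b (s k)).IsHermitian)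
    (hbad : ∀ k, ¬ (b (s k)).PosDef) : ¬ (b t).PosDef := by
  intro hpos
  choose x hx1 hx2 using fun k => exists_unit_form_nonpos (hherm k) (hbad k)
  obtain ⟨z, hz, φ, hφ, hzt⟩ := (isCompact_sphere (0 : Fin n → ℝ) 1).tendsto_subseq
    (fun k => by simpa [Metric.mem_sphere, dist_zero_right] using hx1 k)
  have hz1 : ‖z‖ = 1 := by simpa [Metric.mem_sphere, dist_zero_right] using hz
  have hz0 : z ≠ 0 := by intro h; rw [h] at hz1; simp at hz1
  -- the quadratic form converges
  have hq : Tendsto (fun k => (x (φ k)) ⬝ᵥ (b (s (φ k))) *ᵥ (x (φ k))) atTop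
      (nhds (z ⬝ᵥ (b t) *ᵥ z)) := by
    have hxe : ∀ i, Tendsto (fun k => x (φ k) i) atTop (nhds (z i)) := by
      intro i
      have := hzt
      exact (Filter.Tendsto.comp (continuous_apply i).continuousAt this)
    have hsφ : Tendsto (fun k => s (φ k)) atTop (nhds t) := hs.comp hφ.tendsto_atTop
    have hbe : ∀ i j, Tendsto (fun k => b (s (φ k)) i j) atTop (nhds (b t i j)) := fun i j =>
      (hcont i j).continuousAt.tendsto.comp hsφ
    simp only [dotProduct, Matrix.mulVec]
    exact tendsto_finset_sum _ fun i _ => (hxe i).mul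
      (tendsto_finset_sum _ fun j _ => (hbe i j).mul (hxe j))
  have hle : z ⬝ᵥ (b t) *ᵥ z ≤ 0 := le_of_tendsto hq (Eventually.of_forall fun k => hx2 (φ k))
  have := (Matrix.posDef_iff_dotProduct_mulVec.1 hpos).2 hz0
  simp only [star_trivial] at this
  linarith

private lemma posDef_of_psd_det {n : ℕ} {A : Matrix (Fin n) (Fin n) ℝ}
    (h1 : A.PosSemidef) (h2 : A.det ≠ 0) : A.PosDef := by
  refine Matrix.posDef_iff_dotProduct_mulVec.2 ⟨h1.1, fun x hx => ?_⟩
  rcases lt_or_eq_of_le ((Matrix.posSemidef_iff_dotProduct_mulVec.1 h1).2 x) with h | h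
  · exact h
  · exfalso
    have hker := (h1.dotProduct_mulVec_zero_iff x).1 h.symm
    have hinj : Function.Injective (A.mulVec) :=
      Matrix.mulVec_injective_iff_isUnit.2 ((Matrix.isUnit_iff_isUnit_det A).2
        (isUnit_iff_ne_zero.2 h2))
    exact hx (hinj (by simpa using hker))

end helpers

open Filter in
theorem stmt_17 (n : ℕ) (b m a : ℝ → Matrix (Fin n) (Fin n) ℝ) (W T : ℝ)
    (hW : 0 < W) (hT : 0 < T)
    (hm : Continuous m) (hbound : ∃ C : ℝ, ∀ t (i j : Fin n), |m t i j| ≤ C)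
    (hsymm : ∀ t, (b t).IsSymm)
    (hanti : ∀ t, (a t)ᵀ = -(a t))
    (hC1 : ∀ i j : Fin n, ContDiff ℝ 1 (fun t => b t i j))
    (hder : ∀ t ∈ Set.Ico (0 : ℝ) T, ∀ i j : Fin n, HasDerivAt (fun s => b s i j)
      ((b t * m t + a t * b t - (2 * W)⁻¹ • b t + (2 * W)⁻¹ • (b t)⁻¹) i j) t)
    (h0 : (b 0).PosDef) :
    ∀ t ∈ Set.Ico (0 : ℝ) T, IsUnit (b t).det ∧ (b t).PosDef := by
  obtain ⟨C, hC⟩ := hbound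
  set c : ℝ := (2 * W)⁻¹ with hc_def
  have hc : 0 < c := by positivity
  set K : ℝ := n * max C 0 + n * c with hK_def
  have hcont : ∀ i j : Fin n, Continuous fun s => b s i j := fun i j => (hC1 i j).continuous
  have hherm : ∀ t, (b t).IsHermitian := by
    intro t
    have h1 : (b t)ᴴ = (b t)ᵀ := by
      ext i j; simp [Matrix.conjTranspose_apply]
    exact h1.trans (hsymm t).eq
  have hqc : ∀ x : Fin n → ℝ, Continuous fun u => x ⬝ᵥ (b u) *ᵥ x := by
    intro x
    simp only [dotProduct, Matrix.mulVec]
    exact continuous_finset_sum _ fun i _ => continuous_const.mul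
      (continuous_finset_sum _ fun j _ => (hcont i j).mul continuous_const)
  -- trace lower bound on m
  have htrm : ∀ s : ℝ, -(n * max C 0) ≤ (m s).trace := by
    intro s
    have h1 : ∀ i ∈ Finset.univ, -(max C 0) ≤ m s i i := fun i _ => by
      have := (abs_le.1 (hC s i i)).1
      have := le_max_left C 0
      linarith
    have h2 : (m s).trace = ∑ i, m s i i := rfl
    rw [h2]
    calc -((n:ℝ) * max C 0) = ∑ _i : Fin n, -(max C 0) := by
          simp [Finset.sum_const, Fintype.card_fin]
          try ring
    _ ≤ ∑ i, m s i i := Finset.sum_le_sum h1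
  -- the main Gronwall-type monotonicity
  have hmono : ∀ t0 ∈ Set.Ioc (0:ℝ) T, (∀ s, 0 ≤ s → s < t0 → (b s).PosDef) → t0 < T →
      MonotoneOn (fun s => (b s).det * Real.exp (K * s)) (Set.Icc 0 t0) := by
    intro t0 ht0 hpos ht0T
    have hcontdet : Continuous fun s => (b s).det :=
      (continuous_matrix fun i j => hcont i j).matrix_det
    have hgc : Continuous fun s => (b s).det * Real.exp (K * s) := by fun_prop
    apply monotoneOn_of_deriv_nonneg (convex_Icc 0 t0) hgc.continuousOn
    · intro x hx
      rw [interior_Icc] at hx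
      have hxT : x ∈ Set.Ico (0:ℝ) T := ⟨hx.1.le, lt_trans hx.2 ht0T⟩
      have hD := hasDerivAt_det' b _ x (fun i j => hder x hxT i j)
      have hexp : HasDerivAt (fun s => Real.exp (K * s)) (Real.exp (K * x) * K) x := by
        have h1 : HasDerivAt (fun s : ℝ => K * s) K x := by
          simpa using (hasDerivAt_id x).const_mul K
        exact h1.exp
      exact (hD.mul hexp).differentiableAt.differentiableWithinAt
    · intro x hx
      rw [interior_Icc] at hx
      have hxT : x ∈ Set.Ico (0:ℝ) T := ⟨hx.1.le, lt_trans hx.2 ht0T⟩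
      have hpx : (b x).PosDef := hpos x hx.1.le hx.2
      have hD := hasDerivAt_det' b _ x (fun i j => hder x hxT i j)
      have hexp : HasDerivAt (fun s => Real.exp (K * s)) (Real.exp (K * x) * K) x := by
        have h1 : HasDerivAt (fun s : ℝ => K * s) K x := by
          simpa using (hasDerivAt_id x).const_mul K
        exact h1.exp
      rw [(hD.fun_mul hexp).deriv]
      have htr := trace_ineq (M := m x) hpx (hsymm x) (hanti x) hc.le
      have hdetpos := hpx.det_pos
      have h2 : -K ≤ (m x).trace - c * n := by
        have := htrm x
        rw [hK_def]; nlinarith [htrm x]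
      have h3 : (b x).det * (-K) ≤ (adjugate (b x) *
          (b x * m x + a x * b x - c • b x + c • (b x)⁻¹)).trace := by
        calc (b x).det * (-K) ≤ (b x).det * ((m x).trace - c * n) :=
              mul_le_mul_of_nonneg_left h2 hdetpos.le
        _ ≤ _ := htr
      have hexppos : (0:ℝ) < Real.exp (K * x) := Real.exp_pos _
      nlinarith
  -- main claim
  have key : ∀ t ∈ Set.Ico (0:ℝ) T, (b t).PosDef := by
    by_contra hcon
    push_neg at hcon
    obtain ⟨t1, ht1, hbad1⟩ := hcon
    set G : Set ℝ := {u | u ∈ Set.Icc 0 t1 ∧ ∀ s ∈ Set.Icc (0:ℝ) u, (b s).PosDef} with hG_def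
    have hG0 : (0:ℝ) ∈ G := by
      refine ⟨⟨le_refl 0, ht1.1⟩, fun s hs => ?_⟩
      have : s = 0 := le_antisymm hs.2 hs.1
      rw [this]; exact h0
    have hGbdd : BddAbove G := ⟨t1, fun u hu => hu.1.2⟩
    set t0 : ℝ := sSup G with ht0_def
    have h0le : 0 ≤ t0 := le_csSup hGbdd hG0
    have ht0t1 : t0 ≤ t1 := csSup_le ⟨0, hG0⟩ fun u hu => hu.1.2
    have ht0T : t0 < T := lt_of_le_of_lt ht0t1 ht1.2
    have hlt : ∀ s, 0 ≤ s → s < t0 → (b s).PosDef := by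
      intro s hs0 hst0
      obtain ⟨u, huG, hsu⟩ := exists_lt_of_lt_csSup ⟨0, hG0⟩ hst0
      exact huG.2 s ⟨hs0, hsu.le⟩
    -- b t0 is PosDef
    have hpos0 : (b t0).PosDef := by
      rcases eq_or_lt_of_le h0le with h | h
      · rw [← h]; exact h0
      · have hmono0 := hmono t0 ⟨h, ht0T.le⟩ hlt ht0T
        have hdetpos : ∀ s ∈ Set.Icc (0:ℝ) t0, 0 < (b s).det := by
          intro s hs
          have h2 : (b 0).det ≤ (b s).det * Real.exp (K * s) := by
            simpa using hmono0 (Set.left_mem_Icc.2 h0le) hs hs.1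
          nlinarith [Real.exp_pos (K * s), h0.det_pos]
        refine posDef_of_psd_det (Matrix.posSemidef_iff_dotProduct_mulVec.2 ⟨hherm t0, fun x => ?_⟩) (hdetpos t0 ⟨h0le, le_refl _⟩).ne'
        by_cases hx0 : x = 0
        · simp [hx0]
        · have hsk : Tendsto (fun k : ℕ => t0 - t0 / (k + 1)) atTop (nhds t0) := by
            have h1 : Tendsto (fun k : ℕ => t0 / (k + 1)) atTop (nhds 0) := by
              simpa [div_eq_mul_inv, mul_comm] using
                (tendsto_one_div_add_atTop_nhds_zero_nat.const_mul t0)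
            simpa using (tendsto_const_nhds (x := t0)).sub h1
          have hmem : ∀ k : ℕ, 0 ≤ t0 - t0 / (k + 1) ∧ t0 - t0 / (k + 1) < t0 := by
            intro k
            constructor
            · have : t0 / (k + 1) ≤ t0 := by
                apply div_le_self h.le
                have hk0 : (0:ℝ) ≤ (k:ℝ) := Nat.cast_nonneg k
                linarith
              linarith
            · have : 0 < t0 / ((k:ℝ) + 1) := div_pos h (by positivity)
              linarith
          have hforms : ∀ k : ℕ, 0 ≤ x ⬝ᵥ (b (t0 - t0 / (k + 1))) *ᵥ x := by
            intro k
            have := (Matrix.posDef_iff_dotProduct_mulVec.1 (hlt _ (hmem k).1 (hmem k).2)).2 hx0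
            simpa using this.le
          have := ge_of_tendsto ((hqc x).continuousAt.tendsto.comp hsk)
            (Eventually.of_forall hforms)
          simpa using this
    have ht0G : t0 ∈ G := by
      refine ⟨⟨h0le, ht0t1⟩, fun s hs => ?_⟩
      rcases eq_or_lt_of_le hs.2 with h | h
      · rw [h]; exact hpos0
      · exact hlt s hs.1 h
    have ht0ne : t0 ≠ t1 := by
      intro h
      exact hbad1 (by rw [← h]; exact hpos0)
    have ht0lt : t0 < t1 := lt_of_le_of_ne ht0t1 ht0ne
    -- sequence of bad points approaching t0 from the right
    have hbadk : ∀ k : ℕ, ∃ s, s ∈ Set.Icc 0 (min (t0 + 1 / (k + 1)) t1) ∧ ¬ (b s).PosDef := by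
      intro k
      by_contra hgood
      push_neg at hgood
      have hmem : min (t0 + 1 / (k + 1)) t1 ∈ G := by
        refine ⟨⟨?_, min_le_right _ _⟩, fun s hs => hgood s hs⟩
        have : (0:ℝ) < 1 / ((k:ℝ) + 1) := by positivity
        exact le_min (by linarith) ht1.1
      have := le_csSup hGbdd hmem
      have h1 : t0 < min (t0 + 1 / (k + 1)) t1 := by
        apply lt_min
        · have : (0:ℝ) < 1 / (k + 1) := by positivity
          linarith
        · exact ht0lt
      linarith
    choose sk hsk1 hsk2 using hbadk
    have hskgt : ∀ k, t0 < sk k := by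
      intro k
      by_contra hle
      push_neg at hle
      exact hsk2 k (ht0G.2 (sk k) ⟨(hsk1 k).1, hle⟩)
    have hsktend : Tendsto sk atTop (nhds t0) := by
      have hup : ∀ k : ℕ, sk k ≤ t0 + 1 / (k + 1) :=
        fun k => le_trans (hsk1 k).2 (min_le_left _ _)
      have h1 : Tendsto (fun k : ℕ => t0 + 1 / ((k:ℝ) + 1)) atTop (nhds t0) := by
        simpa using (tendsto_const_nhds (x := t0)).add tendsto_one_div_add_atTop_nhds_zero_nat
      exact tendsto_of_tendsto_of_tendsto_of_le_of_le tendsto_const_nhds h1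
        (fun k => (hskgt k).le) hup
    exact (not_posDef_of_tendsto b hcont sk t0 hsktend (fun k => hherm _) hsk2) hpos0
  intro t ht
  refine ⟨isUnit_iff_ne_zero.2 (key t ht).det_pos.ne', key t ht⟩
end
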